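/- Let (A, Con, |~) be an abstract nonmonotonic system. For any finite consistent set X, the intersection ⋂ {Ỹ | Y ∈ Con, Y ⊆ X ⊆ Ỹ} equals X̃, where X̃ := {t ∈ A | X |~ {t}}. -/

import Mathlib

/-- X̃ := {t ∈ A | X |~ {t}}. -/
def Tilde {α : Type*} (snake : Set α → Set α → Prop) (X : Set α) : Set α :=
  {t | snake X {t}}

/-- for any finite consistent set X,
⋂ {Ỹ | Y ∈ Con, Y ⊆ X ⊆ Ỹ} = X̃. -/
theorem tilde_intersection {α : Type*} (Con : Set α → Prop)
    (snake : Set α → Set α → Prop)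
    -- Con is a collection of finite subsets of A
    (hCfin : ∀ X : Set α, Con X → X.Finite)
    -- |~ is a relation between members of Con
    (hSnakeCon : ∀ X Y : Set α, snake X Y → Con X ∧ Con Y)
    (h1 : ∀ X Y : Set α, X ⊆ Y → Con Y → Con X)
    (h2 : ∀ a : α, Con {a})
    (h3 : ∀ X T : Set α, snake X T → Con (X ∪ T))
    (h4 : ∀ X Y : Set α, Y ⊆ X → Con X → snake X Y)
    (h5 : ∀ X T Y : Set α, snake X T → snake (X ∪ T) Y → snake X Y)
    (h6 : ∀ X Y Z : Set α, snake X Y → snake X Z → snake X (Y ∪ Z)) :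
    ∀ X : Set α, Con X →
      ⋂₀ {S : Set α | ∃ Y : Set α, Con Y ∧ Y ⊆ X ∧ X ⊆ Tilde snake Y ∧
            S = Tilde snake Y} = Tilde snake X := by
  intro X hX
  -- auxiliary: if every element of a finite set Z satisfies snake Y {z}, then snake Y Z
  have key : ∀ Y Z : Set α, Con Y → Z.Finite → (∀ z ∈ Z, snake Y {z}) → snake Y Z := by
    intro Y Z hY hZfin
    refine Set.Finite.induction_on (motive := fun Z _ => (∀ z ∈ Z, snake Y {z}) → snake Y Z)
      Z hZfin (fun _ => h4 Y ∅ (Set.empty_subset Y) hY) ?_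
    intro a s _ _ ih hall
    have h1' : snake Y {a} := hall a (Set.mem_insert a s)
    have h2' : snake Y s := ih (fun z hz => hall z (Set.mem_insert_of_mem a hz))
    have := h6 Y {a} s h1' h2'
    rwa [Set.singleton_union] at this
  apply Set.Subset.antisymm
  · intro t ht
    have hXmem : Tilde snake X ∈ {S : Set α | ∃ Y : Set α, Con Y ∧ Y ⊆ X ∧
        X ⊆ Tilde snake X ∧ S = Tilde snake Y} := by
      exact ⟨X, hX, subset_rfl, fun x hx => h4 X {x} (Set.singleton_subset_iff.2 hx) hX, rfl⟩
    exact ht _ ⟨X, hX, subset_rfl,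
      fun x hx => h4 X {x} (Set.singleton_subset_iff.2 hx) hX, rfl⟩
  · intro t ht S hS
    obtain ⟨Y, hY, hYX, hXY, rfl⟩ := hS
    -- snake Y X
    have hYsX : snake Y X := key Y X hY (hCfin X hX) (fun x hx => hXY hx)
    have hUnion : Y ∪ X = X := Set.union_eq_self_of_subset_left hYX
    have : snake (Y ∪ X) {t} := by rw [hUnion]; exact ht
    exact h5 Y X {t} hYsX this
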